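/- Let φ, u ∈ ℝˡ and set Φ̃ = φφᵀ + φuᵀ + uφᵀ. If φᵀu - √((φᵀφ)(uᵀu)) ≥ 0 then Φ̃ is positive semidefinite; if φᵀφ + φᵀu + √((φᵀφ)(uᵀu)) ≤ 0 then Φ̃ is negative semidefinite. -/

import Mathlib

open Matrix

lemma quadForm_vecMulVec {l : ℕ} (a b x : Fin l → ℝ) :
    dotProduct x ((vecMulVec a b) *ᵥ x) = (dotProduct a x) * (dotProduct b x) := by
  simp only [mulVec, dotProduct, vecMulVec_apply, Finset.mul_sum, Finset.sum_mul]
  rw [Finset.sum_comm]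
  apply Finset.sum_congr rfl; intro i _
  apply Finset.sum_congr rfl; intro j _
  ring

theorem phi_tilde_semidef (l : ℕ) (φ u : Fin l → ℝ) :
    (φ ⬝ᵥ u - Real.sqrt ((φ ⬝ᵥ φ) * (u ⬝ᵥ u)) ≥ 0 →
      (vecMulVec φ φ + vecMulVec φ u + vecMulVec u φ).PosSemidef) ∧
    (φ ⬝ᵥ φ + φ ⬝ᵥ u + Real.sqrt ((φ ⬝ᵥ φ) * (u ⬝ᵥ u)) ≤ 0 →
      (-(vecMulVec φ φ + vecMulVec φ u + vecMulVec u φ)).PosSemidef) := by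
  have hφφ : 0 ≤ φ ⬝ᵥ φ := Finset.sum_nonneg fun i _ => mul_self_nonneg _
  have huu : 0 ≤ u ⬝ᵥ u := Finset.sum_nonneg fun i _ => mul_self_nonneg _
  have hprod : 0 ≤ (φ ⬝ᵥ φ) * (u ⬝ᵥ u) := mul_nonneg hφφ huu
  have hsq : (Real.sqrt ((φ ⬝ᵥ φ) * (u ⬝ᵥ u)))^2 = (φ ⬝ᵥ φ) * (u ⬝ᵥ u) :=
    Real.sq_sqrt hprod
  have hsqrt_nonneg : 0 ≤ Real.sqrt ((φ ⬝ᵥ φ) * (u ⬝ᵥ u)) := Real.sqrt_nonneg _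
  -- Cauchy-Schwarz: (φ⬝u)² ≤ (φ⬝φ)(u⬝u)
  have hCS : (φ ⬝ᵥ u)^2 ≤ (φ ⬝ᵥ φ) * (u ⬝ᵥ u) := by
    have := Finset.sum_mul_sq_le_sq_mul_sq (Finset.univ : Finset (Fin l)) φ u
    simpa [dotProduct, sq] using this
  have herm : ((vecMulVec φ φ + vecMulVec φ u + vecMulVec u φ)).IsHermitian := by
    unfold Matrix.IsHermitian
    ext i j
    simp [vecMulVec_apply, conjTranspose_apply, Matrix.add_apply]
    ring
  have hquad : ∀ x : Fin l → ℝ,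
      dotProduct x ((vecMulVec φ φ + vecMulVec φ u + vecMulVec u φ) *ᵥ x)
        = (φ ⬝ᵥ x) * (φ ⬝ᵥ x) + (φ ⬝ᵥ x) * (u ⬝ᵥ x) + (u ⬝ᵥ x) * (φ ⬝ᵥ x) := by
    intro x
    rw [add_mulVec, add_mulVec, dotProduct_add, dotProduct_add,
      quadForm_vecMulVec, quadForm_vecMulVec, quadForm_vecMulVec]
  constructor
  · intro h1
    have hφu_nonneg : 0 ≤ φ ⬝ᵥ u := le_trans hsqrt_nonneg (by linarith)
    have hge : (φ ⬝ᵥ φ) * (u ⬝ᵥ u) ≤ (φ ⬝ᵥ u)^2 := by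
      have : Real.sqrt ((φ ⬝ᵥ φ) * (u ⬝ᵥ u)) ≤ φ ⬝ᵥ u := by linarith
      nlinarith
    have heq : (φ ⬝ᵥ u)^2 = (φ ⬝ᵥ φ) * (u ⬝ᵥ u) := le_antisymm hCS hge
    refine posSemidef_iff_dotProduct_mulVec.mpr ⟨herm, fun x => ?_⟩
    rw [show star x = x from rfl, hquad x]
    by_cases hφ0 : φ ⬝ᵥ φ = 0
    · have : φ = 0 := dotProduct_self_eq_zero.mp hφ0
      subst this
      simp
    · have hφpos : 0 < φ ⬝ᵥ φ := lt_of_le_of_ne hφφ (Ne.symm hφ0)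
      -- v := (φ⬝φ)•u - (φ⬝u)•φ has v⬝v = 0, so v = 0
      set v : Fin l → ℝ := (φ ⬝ᵥ φ) • u - (φ ⬝ᵥ u) • φ with hv
      have hvv : v ⬝ᵥ v = 0 := by
        have expand : v ⬝ᵥ v = (φ ⬝ᵥ φ) * ((φ ⬝ᵥ φ) * (u ⬝ᵥ u) - (φ ⬝ᵥ u)^2) := by
          simp only [hv, sub_dotProduct, dotProduct_sub, smul_dotProduct,
            dotProduct_smul, smul_eq_mul]
          rw [show u ⬝ᵥ φ = φ ⬝ᵥ u from dotProduct_comm u φ]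
          ring
        rw [expand, heq]
        ring
      have hv0 : v = 0 := dotProduct_self_eq_zero.mp hvv
      have hkey : (φ ⬝ᵥ φ) * (u ⬝ᵥ x) = (φ ⬝ᵥ u) * (φ ⬝ᵥ x) := by
        have : v ⬝ᵥ x = 0 := by rw [hv0]; simp
        simp only [hv, sub_dotProduct, smul_dotProduct, smul_eq_mul, sub_eq_zero] at this
        exact this
      have : (φ ⬝ᵥ φ) * ((φ ⬝ᵥ x) * (φ ⬝ᵥ x) + (φ ⬝ᵥ x) * (u ⬝ᵥ x) + (u ⬝ᵥ x) * (φ ⬝ᵥ x))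
          = ((φ ⬝ᵥ φ) + 2 * (φ ⬝ᵥ u)) * (φ ⬝ᵥ x)^2 := by
        linear_combination (2 * (φ ⬝ᵥ x)) * hkey
      have h2 : 0 ≤ (φ ⬝ᵥ φ) * ((φ ⬝ᵥ x) * (φ ⬝ᵥ x) + (φ ⬝ᵥ x) * (u ⬝ᵥ x) + (u ⬝ᵥ x) * (φ ⬝ᵥ x)) := by
        rw [this]
        exact mul_nonneg (by linarith) (sq_nonneg _)
      nlinarith [h2, hφpos]
  · intro h2
    have hφu_ge : -(Real.sqrt ((φ ⬝ᵥ φ) * (u ⬝ᵥ u))) ≤ φ ⬝ᵥ u := by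
      nlinarith [abs_nonneg (φ ⬝ᵥ u), neg_abs_le (φ ⬝ᵥ u), sq_abs (φ ⬝ᵥ u)]
    have hφ0 : φ ⬝ᵥ φ = 0 := le_antisymm (by linarith) hφφ
    have : φ = 0 := dotProduct_self_eq_zero.mp hφ0
    subst this
    refine posSemidef_iff_dotProduct_mulVec.mpr ⟨herm.neg, fun x => ?_⟩
    rw [show star x = x from rfl, neg_mulVec, dotProduct_neg, hquad x]
    simp
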